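/- In the situation of the coordinate change u = z − q with q ∈ 𝕂[x₁,…,xₙ] a nonzero homogeneous polynomial of positive degree: if c!·deg q ≥ o, then o₁ ≥ o. Here J ⊆ R = 𝕂[[z,x₁,…,xₙ]] is an ideal of order c with 1 ≤ c < ∞, o = ord coeff_{V(z)}(J) and o₁ = ord coeff_{V(u)}(J). -/

import Mathlib

set_option synthInstance.maxHeartbeats 400000
set_option maxHeartbeats 1000000

noncomputable section

/-- The order of an element `g` with respect to an ideal `I`:  `sup {k : ℕ | g ∈ I ^ k}`,
with value in `ℕ∞` (so that the order of `0` is `⊤`). -/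
def elemOrd {A : Type*} [CommRing A] (I : Ideal A) (g : A) : ℕ∞ :=
  sSup ((fun k : ℕ => (k : ℕ∞)) '' {k : ℕ | g ∈ I ^ k})

/-- The order of an ideal `J` with respect to an ideal `I`: `sup {k : ℕ | J ⊆ I ^ k}`. -/
def idealOrd {A : Type*} [CommRing A] (I J : Ideal A) : ℕ∞ :=
  sSup ((fun k : ℕ => (k : ℕ∞)) '' {k : ℕ | J ≤ I ^ k})

/-- The coefficient ideal `K = coeff_{V(z)}(J) = Σ_{i<c} (f_i : f ∈ J)^{c!/(c−i)}` of an ideal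
`J ⊆ R = 𝕂[[z,x₁,…,xₙ]] = Q[[z]]` with respect to the hypersurface `V(z)`, an ideal of
`Q = 𝕂[[x₁,…,xₙ]]`. -/
def coeffIdeal {𝕂 : Type*} [Field 𝕂] {n : ℕ}
    (J : Ideal (PowerSeries (MvPowerSeries (Fin n) 𝕂))) (c : ℕ) :
    Ideal (MvPowerSeries (Fin n) 𝕂) :=
  ∑ i ∈ Finset.range c,
    (Ideal.span ((PowerSeries.coeff (R := MvPowerSeries (Fin n) 𝕂) i) '' J)) ^ (c.factorial / (c - i))

/-- The coefficient ideal `K₁ = coeff_{V(u)}(J) = Σ_{i<c} (f̃_i : f ∈ J)^{c!/(c−i)}` of `J`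
with respect to `V(u)`, computed from a function `E` assigning to each `f ∈ R` the family of
coefficients of its `u`-expansion. -/
def coeffIdealE {𝕂 : Type*} [Field 𝕂] {n : ℕ}
    (E : PowerSeries (MvPowerSeries (Fin n) 𝕂) → ℕ → MvPowerSeries (Fin n) 𝕂)
    (J : Ideal (PowerSeries (MvPowerSeries (Fin n) 𝕂))) (c : ℕ) :
    Ideal (MvPowerSeries (Fin n) 𝕂) :=
  ∑ i ∈ Finset.range c, (Ideal.span ((fun f => E f i) '' J)) ^ (c.factorial / (c - i))

/-- An element `f = Σ_{i≥0} f_i z^i` of `R = Q[[z]]` is `z`-regular of order `c` if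
`f_i(0) = 0` for all `i < c` and `f_c(0) ≠ 0`. -/
def zRegular {𝕂 : Type*} [Field 𝕂] {n : ℕ}
    (f : PowerSeries (MvPowerSeries (Fin n) 𝕂)) (c : ℕ) : Prop :=
  (∀ i < c, MvPowerSeries.constantCoeff (σ := Fin n) (R := 𝕂)
      (PowerSeries.coeff (R := MvPowerSeries (Fin n) 𝕂) i f) = 0) ∧
    MvPowerSeries.constantCoeff (σ := Fin n) (R := 𝕂)
      (PowerSeries.coeff (R := MvPowerSeries (Fin n) 𝕂) c f) ≠ 0


section AuxMaterial

/-! Auxiliary material -/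

section NatCeil

lemma ceil_mul_ge {x y : ℕ} (hy : 1 ≤ y) : x ≤ ((x + y - 1) / y) * y := by
  by_contra h
  push_neg at h
  have h2 : (x + y - 1) / y + 1 ≤ (x + y - 1) / y := by
    apply (Nat.le_div_iff_mul_le hy).mpr
    rw [Nat.succ_mul]
    generalize (x + y - 1) / y * y = m at h ⊢
    omega
  exact absurd h2 (Nat.not_succ_le_self _)

lemma le_ceil {x y t : ℕ} (hy : 1 ≤ y) (h : x ≤ t * y) : (x + y - 1) / y ≤ t := by
  have h1 : x + y - 1 < (t + 1) * y := by
    rw [Nat.succ_mul]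
    omega
  have := (Nat.div_lt_iff_lt_mul (Nat.lt_of_lt_of_le Nat.zero_lt_one hy)).mpr h1
  exact Nat.lt_succ_iff.mp this

end NatCeil

section IdealSums

variable {A : Type*} [CommRing A] {ι : Type*}

lemma ideal_le_sum (s : Finset ι) (p : ι → Ideal A) {i : ι} (hi : i ∈ s) :
    p i ≤ ∑ j ∈ s, p j := by
  classical
  induction s using Finset.induction with
  | empty => exact absurd hi (Finset.notMem_empty i)
  | insert _ _ hj ih =>
    rw [Finset.sum_insert hj, Submodule.add_eq_sup]
    rcases Finset.mem_insert.mp hi with h | h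
    · exact h ▸ le_sup_left
    · exact le_trans (ih h) le_sup_right

lemma ideal_sum_le (s : Finset ι) (p : ι → Ideal A) {P : Ideal A}
    (h : ∀ i ∈ s, p i ≤ P) : ∑ j ∈ s, p j ≤ P := by
  classical
  induction s using Finset.induction with
  | empty => simpa using bot_le
  | insert _ _ hj ih =>
    rw [Finset.sum_insert hj, Submodule.add_eq_sup]
    exact sup_le (h _ (Finset.mem_insert_self _ _))
      (ih fun i hi => h i (Finset.mem_insert_of_mem hi))

end IdealSums

section OidSection
open MvPowerSeries Finsupp

variable {𝕂 : Type*} [Field 𝕂] {n : ℕ}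

local notation "Q" => MvPowerSeries (Fin n) 𝕂

lemma degree_add' (a b : Fin n →₀ ℕ) :
    Finsupp.degree (a + b) = Finsupp.degree a + Finsupp.degree b := by
  exact map_add Finsupp.degree a b

lemma degree_single' (i : Fin n) : Finsupp.degree (Finsupp.single i 1) = 1 := by
  exact Finsupp.degree_single i 1

/-- The ideal of power series of order at least `k`. -/
def Oid (k : ℕ) : Ideal (MvPowerSeries (Fin n) 𝕂) where
  carrier := {f | (k : ℕ∞) ≤ f.order}
  add_mem' := fun {a b} ha hb => le_trans (le_min ha hb) min_order_le_add
  zero_mem' := by simp only [Set.mem_setOf_eq, order_zero, le_top]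
  smul_mem' := fun c x hx => by
    simp only [smul_eq_mul, Set.mem_setOf_eq] at *
    calc (k : ℕ∞) ≤ x.order := hx
    _ ≤ c.order + x.order := le_add_self
    _ ≤ (c * x).order := le_order_mul

lemma mem_Oid {k : ℕ} {f : MvPowerSeries (Fin n) 𝕂} :
    f ∈ Oid (𝕂 := 𝕂) (n := n) k ↔ (k : ℕ∞) ≤ f.order := Iff.rfl

lemma Oid_mul (a b : ℕ) :
    Oid (𝕂 := 𝕂) (n := n) a * Oid b ≤ Oid (a + b) := by
  rw [Ideal.mul_le]
  intro f hf g hg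
  rw [mem_Oid] at *
  calc ((a + b : ℕ) : ℕ∞) = (a : ℕ∞) + (b : ℕ∞) := by push_cast; rfl
  _ ≤ f.order + g.order := add_le_add hf hg
  _ ≤ (f * g).order := le_order_mul

lemma Oid_anti {a b : ℕ} (h : a ≤ b) : Oid (𝕂 := 𝕂) (n := n) b ≤ Oid a := by
  intro f hf
  rw [mem_Oid] at *
  exact le_trans (by exact_mod_cast h) hf

lemma pow_mem_Oid {x : MvPowerSeries (Fin n) 𝕂} {a : ℕ} (hx : x ∈ Oid (𝕂 := 𝕂) a) (k : ℕ) :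
    x ^ k ∈ Oid (k * a) := by
  induction k with
  | zero => rw [mem_Oid]; simp
  | succ k ih =>
    have := Ideal.mul_mem_mul ih hx
    rw [← pow_succ] at this
    exact Oid_anti (le_of_eq (by ring)) (Oid_mul _ _ this)

lemma mem_maxQ {f : MvPowerSeries (Fin n) 𝕂} :
    f ∈ IsLocalRing.maximalIdeal (MvPowerSeries (Fin n) 𝕂) ↔
      constantCoeff (σ := Fin n) (R := 𝕂) f = 0 := by
  rw [IsLocalRing.mem_maximalIdeal, mem_nonunits_iff, MvPowerSeries.isUnit_iff_constantCoeff]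
  simp [isUnit_iff_ne_zero]

lemma maxQ_le_Oid1 : IsLocalRing.maximalIdeal (MvPowerSeries (Fin n) 𝕂) ≤ Oid (𝕂 := 𝕂) 1 := by
  intro f hf
  rw [mem_Oid]
  exact_mod_cast nat_le_order (n := 1) fun d hd => by
    have hd0 : d = 0 := (Finsupp.degree_eq_zero_iff d).mp (by omega)
    rw [hd0, coeff_zero_eq_constantCoeff_apply]
    exact mem_maxQ.mp hf

lemma Oid1_le_maxQ : Oid (𝕂 := 𝕂) (n := n) 1 ≤ IsLocalRing.maximalIdeal _ := by
  intro f hf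
  rw [mem_Oid] at hf
  rw [mem_maxQ, ← coeff_zero_eq_constantCoeff_apply]
  apply coeff_of_lt_order
  rw [map_zero]
  exact lt_of_lt_of_le (by exact_mod_cast Nat.zero_lt_one) hf

lemma maxQ_pow_le_Oid (k : ℕ) :
    (IsLocalRing.maximalIdeal (MvPowerSeries (Fin n) 𝕂)) ^ k ≤ Oid (𝕂 := 𝕂) k := by
  induction k with
  | zero => intro f _; rw [mem_Oid]; simp
  | succ k ih =>
    rw [pow_succ]
    exact le_trans (Ideal.mul_mono ih maxQ_le_Oid1) (Oid_mul k 1)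

open Classical in
/-- Splitting off the variable with least index. -/
def splitPart (f : MvPowerSeries (Fin n) 𝕂) (i : Fin n) : MvPowerSeries (Fin n) 𝕂 :=
  fun e => if ∀ j, j < i → e j = 0 then coeff (e + Finsupp.single i 1) f else 0

open Classical in
lemma coeff_splitPart (f : MvPowerSeries (Fin n) 𝕂) (i : Fin n) (e : Fin n →₀ ℕ) :
    coeff e (splitPart f i)
      = if ∀ j, j < i → e j = 0 then coeff (e + Finsupp.single i 1) f else 0 := by
  rw [coeff_apply]
  rfl

lemma splitPart_decomp {f : MvPowerSeries (Fin n) 𝕂} (hf : f ∈ Oid (𝕂 := 𝕂) 1) :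
    f = ∑ i : Fin n, X i * splitPart f i := by
  classical
  apply MvPowerSeries.ext
  intro e
  rw [map_sum]
  by_cases he : e = 0
  · subst he
    have h0 : coeff (0 : Fin n →₀ ℕ) f = 0 := by
      apply coeff_of_lt_order
      rw [map_zero]
      exact lt_of_lt_of_le (by exact_mod_cast Nat.zero_lt_one) (mem_Oid.mp hf)
    rw [h0]
    apply (Finset.sum_eq_zero _).symm
    intro i _
    rw [X_def, coeff_monomial_mul, if_neg]
    intro hle
    have := Finsupp.single_le_iff.mp hle
    simp at this
  · have hs : e.support.Nonempty := Finsupp.support_nonempty_iff.mpr he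
    set i0 := e.support.min' hs with hi0def
    have hi0 : e i0 ≠ 0 := Finsupp.mem_support_iff.mp (e.support.min'_mem hs)
    have hle0 : Finsupp.single i0 1 ≤ e := Finsupp.single_le_iff.mpr (Nat.one_le_iff_ne_zero.mpr hi0)
    rw [Finset.sum_eq_single i0]
    · rw [X_def, coeff_monomial_mul, if_pos hle0, one_mul, coeff_splitPart, if_pos, tsub_add_cancel_of_le hle0]
      intro j hj
      have hjs : j ∉ e.support := fun hmem => absurd (e.support.min'_le j hmem) (by rw [← hi0def]; omega)
      have hje : e j = 0 := by simpa using (Finsupp.notMem_support_iff.mp hjs)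
      rw [Finsupp.tsub_apply, Finsupp.single_apply, if_neg (by omega : ¬ i0 = j), hje]
      rfl
    · intro i _ hi
      rw [X_def, coeff_monomial_mul]
      split_ifs with h1
      · rw [coeff_splitPart, if_neg, mul_zero]
        intro hall
        have h2 : 1 ≤ e i := Finsupp.single_le_iff.mp h1
        have h3 : i0 ≤ i := e.support.min'_le i (Finsupp.mem_support_iff.mpr (by omega))
        have h4 : i0 < i := lt_of_le_of_ne h3 (Ne.symm hi)
        have h5 := hall i0 h4
        rw [Finsupp.tsub_apply, Finsupp.single_apply, if_neg (by omega : ¬ i = i0)] at h5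
        omega
      · rfl
    · intro h
      exact absurd (Finset.mem_univ i0) h

lemma splitPart_mem {f : MvPowerSeries (Fin n) 𝕂} {k : ℕ}
    (hf : f ∈ Oid (𝕂 := 𝕂) (k + 1)) (i : Fin n) : splitPart f i ∈ Oid (𝕂 := 𝕂) k := by
  classical
  rw [mem_Oid]
  apply nat_le_order
  intro dd hdd
  rw [coeff_splitPart]
  split_ifs with h
  · apply coeff_of_lt_order
    refine lt_of_lt_of_le ?_ (mem_Oid.mp hf)
    rw [degree_add', degree_single']
    exact_mod_cast Nat.add_lt_add_right hdd 1
  · rfl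

lemma Oid_le_maxQ_pow :
    ∀ k : ℕ, Oid (𝕂 := 𝕂) (n := n) k ≤ (IsLocalRing.maximalIdeal (MvPowerSeries (Fin n) 𝕂)) ^ k := by
  intro k
  induction k with
  | zero => rw [pow_zero, Ideal.one_eq_top]; exact le_top
  | succ k ih =>
    intro f hf
    rw [splitPart_decomp (Oid_anti (by omega : 1 ≤ k + 1) hf)]
    apply Submodule.sum_mem
    intro i _
    rw [pow_succ']
    exact Ideal.mul_mem_mul (mem_maxQ.mpr (constantCoeff_X i)) (ih (splitPart_mem hf i))


/-- supported in degree `s` only -/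
def IsHomogPS (s : ℕ) (φ : MvPowerSeries (Fin n) 𝕂) : Prop :=
  ∀ e : Fin n →₀ ℕ, Finsupp.degree e ≠ s → coeff e φ = 0

lemma IsHomogPS.mul {s t : ℕ} {φ ψ : MvPowerSeries (Fin n) 𝕂}
    (hφ : IsHomogPS s φ) (hψ : IsHomogPS t ψ) : IsHomogPS (s + t) (φ * ψ) := by
  intro e he
  rw [coeff_mul]
  apply Finset.sum_eq_zero
  rintro ⟨a, b⟩ hab
  rw [Finset.HasAntidiagonal.mem_antidiagonal] at hab
  by_cases ha : Finsupp.degree a = s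
  · by_cases hb : Finsupp.degree b = t
    · exact absurd (by rw [← hab, degree_add', ha, hb]) he
    · rw [hψ b hb, mul_zero]
  · rw [hφ a ha, zero_mul]

lemma IsHomogPS.pow {s : ℕ} {φ : MvPowerSeries (Fin n) 𝕂}
    (hφ : IsHomogPS s φ) (e : ℕ) : IsHomogPS (e * s) (φ ^ e) := by
  induction e with
  | zero =>
    intro d hd
    rw [pow_zero]
    classical
    rw [MvPowerSeries.coeff_one, if_neg]
    intro h0
    exact hd (by simp [h0])
  | succ e ih =>
    have := ih.mul hφ
    rw [pow_succ]
    rwa [show (e+1)*s = e*s + s by ring]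

lemma Oid_of_isHomog {s : ℕ} {φ : MvPowerSeries (Fin n) 𝕂} (h : IsHomogPS s φ) :
    φ ∈ Oid s :=
  mem_Oid.mpr (nat_le_order fun e hd => h e (Nat.ne_of_lt hd))

lemma order_facts {x : MvPowerSeries (Fin n) 𝕂} {e o : ℕ} (he : 1 ≤ e)
    (hx : (o : ℕ∞) ≤ (x ^ e).order) :
    ∃ s : ℕ, (s : ℕ∞) ≤ x.order ∧ o ≤ e * s := by
  by_cases hx0 : x = 0
  · exact ⟨o, by simp [hx0], Nat.le_mul_of_pos_left o he⟩
  · have hne : x.order ≠ ⊤ := by rwa [ne_eq, order_eq_top_iff]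
    obtain ⟨s, hs⟩ := WithTop.ne_top_iff_exists.mp hne
    refine ⟨s, le_of_eq hs, ?_⟩
    have hxo : x.order = (s : ℕ∞) := hs.symm
    set P := homogeneousComponent s x with hP
    have hPx : ∀ e' : Fin n →₀ ℕ, Finsupp.degree e' = s → coeff e' P = coeff e' x := by
      intro e' h
      rw [hP, coeff_homogeneousComponent, if_pos h]
    have hPhom : IsHomogPS s P := by
      intro e' h
      rw [hP, coeff_homogeneousComponent, if_neg h]
    obtain ⟨⟨d0, hd0c, hd0⟩, hlow⟩ := (order_eq_nat).mp hxo
    have hPne : P ≠ 0 := fun h => hd0c (by rw [← hPx d0 hd0, h, map_zero])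
    have hPOid : P ∈ Oid s := Oid_of_isHomog hPhom
    have hrOid : x - P ∈ Oid (s + 1) := by
      rw [mem_Oid]
      apply nat_le_order
      intro e' h
      rw [map_sub]
      rcases Nat.lt_succ_iff_lt_or_eq.mp h with h | h
      · rw [hlow e' h, hPhom e' (Nat.ne_of_lt h), sub_zero]
      · rw [hPx e' h, sub_self]
    have key : x ^ e - P ^ e ∈ Oid (e * s + 1) := by
      have hxPr : x = P + (x - P) := by ring
      rw [hxPr, add_pow, Finset.sum_range_succ, Nat.sub_self, pow_zero, mul_one,
        Nat.choose_self, Nat.cast_one, mul_one, add_sub_cancel_right]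
      apply Submodule.sum_mem
      intro k hk
      have hk' : k < e := Finset.mem_range.mp hk
      have h1 : P ^ k ∈ Oid (k * s) := pow_mem_Oid hPOid k
      have h2 : (x - P) ^ (e - k) ∈ Oid ((e - k) * (s + 1)) := pow_mem_Oid hrOid (e - k)
      have h3 : P ^ k * (x - P) ^ (e - k) ∈ Oid (k * s + (e - k) * (s + 1)) :=
        Oid_mul _ _ (Ideal.mul_mem_mul h1 h2)
      have h4 := Ideal.mul_mem_right ((e.choose k : ℕ) : MvPowerSeries (Fin n) 𝕂) _ h3
      refine Oid_anti ?_ h4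
      obtain ⟨t, ht1, ht2⟩ : ∃ t, e = k + t ∧ 1 ≤ t := ⟨e - k, by omega, by omega⟩
      subst ht1
      have h5 : (k + t) * s + 1 = (k * s + t * s) + 1 := by ring
      have h6 : k * s + (k + t - k) * (s + 1) = (k * s + t * s) + t := by
        rw [Nat.add_sub_cancel_left]; ring
      rw [h5, h6]
      exact Nat.add_le_add_left ht2 _
    obtain ⟨d1, hd1⟩ : ∃ d', coeff d' (P ^ e) ≠ 0 := by
      by_contra hall
      push_neg at hall
      exact pow_ne_zero e hPne (MvPowerSeries.ext fun dd => by rw [hall dd, map_zero])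
    have hdeg1 : Finsupp.degree d1 = e * s := by
      by_contra h
      exact hd1 ((hPhom.pow e) d1 h)
    have hco : coeff d1 (x ^ e) = coeff d1 (P ^ e) := by
      have h0 : coeff d1 (x ^ e - P ^ e) = 0 := by
        apply coeff_of_lt_order
        refine lt_of_lt_of_le ?_ (mem_Oid.mp key)
        rw [hdeg1]
        exact_mod_cast Nat.lt_succ_self (e * s)
      rw [map_sub] at h0
      exact sub_eq_zero.mp h0
    have hfin : (x ^ e).order ≤ ((e * s : ℕ) : ℕ∞) := by
      have := order_le (f := x ^ e) (hco ▸ hd1)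
      rwa [hdeg1] at this
    exact_mod_cast le_trans hx hfin



end OidSection
variable {𝕂 : Type*} [Field 𝕂] {n : ℕ}


lemma le_idealOrd_of_le {A : Type*} [CommRing A] {I J : Ideal A} {o : ℕ} (h : J ≤ I ^ o) :
    (o : ℕ∞) ≤ idealOrd I J := le_sSup ⟨o, h, rfl⟩

lemma le_pow_of_idealOrd_eq {A : Type*} [CommRing A] {I J : Ideal A} {o : ℕ}
    (h : idealOrd I J = (o : ℕ∞)) : J ≤ I ^ o := by
  rcases Nat.eq_zero_or_pos o with ho | ho
  · rw [ho, pow_zero, Ideal.one_eq_top]; exact le_top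
  · by_contra hno
    have hub : ∀ k ∈ {k : ℕ | J ≤ I ^ k}, k ≤ o - 1 := by
      intro k hk
      have h1 : (k : ℕ∞) ≤ (o : ℕ∞) := h ▸ le_sSup ⟨k, hk, rfl⟩
      have h2 : k ≤ o := by exact_mod_cast h1
      have h3 : k ≠ o := fun heq => hno (heq ▸ hk)
      omega
    have h4 : idealOrd I J ≤ ((o - 1 : ℕ) : ℕ∞) := by
      apply sSup_le
      rintro x ⟨k, hk, rfl⟩
      show ((k:ℕ):ℕ∞) ≤ _; exact_mod_cast hub k hk
    rw [h] at h4
    have h5 : o ≤ o - 1 := by exact_mod_cast h4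
    omega

lemma coeff_span_pow (qq : MvPowerSeries (Fin n) 𝕂) (d : ℕ)
    (hq : qq ∈ (IsLocalRing.maximalIdeal (MvPowerSeries (Fin n) 𝕂)) ^ d) (c' : ℕ) :
    ∀ h : PowerSeries (MvPowerSeries (Fin n) 𝕂),
      h ∈ (Ideal.span {PowerSeries.X, PowerSeries.C (R := MvPowerSeries (Fin n) 𝕂) qq}) ^ c' →
      ∀ j : ℕ, PowerSeries.coeff (R := MvPowerSeries (Fin n) 𝕂) j h
        ∈ (IsLocalRing.maximalIdeal (MvPowerSeries (Fin n) 𝕂)) ^ (d * (c' - j)) := by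
  induction c' with
  | zero =>
    intro h _ j
    rw [Nat.zero_sub, Nat.mul_zero, pow_zero, Ideal.one_eq_top]
    exact Submodule.mem_top
  | succ c' ih =>
    intro h hh
    rw [pow_succ] at hh
    refine Submodule.mul_induction_on hh (fun a ha b hb => ?_) (fun x y hx hy j => ?_)
    · obtain ⟨xx, yy, hxy⟩ := Ideal.mem_span_pair.mp hb
      intro j
      have hab : a * b = (xx * a) * PowerSeries.X
          + (yy * a) * PowerSeries.C (R := MvPowerSeries (Fin n) 𝕂) qq := by
        rw [← hxy]; ring
      rw [hab, map_add]
      apply Ideal.add_mem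
      · cases j with
        | zero =>
          rw [PowerSeries.coeff_zero_eq_constantCoeff, map_mul, PowerSeries.constantCoeff_X,
            mul_zero]
          exact Submodule.zero_mem _
        | succ j' =>
          rw [PowerSeries.coeff_succ_mul_X, Nat.succ_sub_succ]
          exact ih (xx * a) (Ideal.mul_mem_left _ xx ha) j'
      · rw [PowerSeries.coeff_mul_C]
        have h1 := ih (yy * a) (Ideal.mul_mem_left _ yy ha) j
        have h2 := Ideal.mul_mem_mul h1 hq
        rw [← pow_add] at h2
        refine Ideal.pow_le_pow_right ?_ h2
        have h3 : c' + 1 - j ≤ (c' - j) + 1 := by omega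
        calc d * (c' + 1 - j) ≤ d * ((c' - j) + 1) := Nat.mul_le_mul_left d h3
        _ = d * (c' - j) + d := by ring
    · rw [map_add]
      exact Ideal.add_mem _ (hx j) (hy j)

lemma coeff_u_pow (qq : MvPowerSeries (Fin n) 𝕂) (i : ℕ) :
    PowerSeries.coeff (R := MvPowerSeries (Fin n) 𝕂) i
        ((PowerSeries.X - PowerSeries.C qq) ^ i) = 1 ∧
      ∀ j, i < j → PowerSeries.coeff (R := MvPowerSeries (Fin n) 𝕂) j
        ((PowerSeries.X - PowerSeries.C qq) ^ i) = 0 := by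
  induction i with
  | zero =>
    constructor
    · simp
    · intro j hj
      rw [pow_zero, PowerSeries.coeff_one, if_neg (by omega)]
  | succ i ih =>
    have hco : ∀ j : ℕ, PowerSeries.coeff (R := MvPowerSeries (Fin n) 𝕂) (j + 1)
        ((PowerSeries.X - PowerSeries.C qq) ^ (i + 1))
        = PowerSeries.coeff j ((PowerSeries.X - PowerSeries.C qq) ^ i)
          - PowerSeries.coeff (j + 1) ((PowerSeries.X - PowerSeries.C qq) ^ i) * qq := by
      intro j
      rw [pow_succ, mul_sub, map_sub, PowerSeries.coeff_succ_mul_X, PowerSeries.coeff_mul_C]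
    constructor
    · rw [hco i, ih.1, ih.2 (i + 1) (Nat.lt_succ_self i), zero_mul, sub_zero]
    · intro j hj
      obtain ⟨j', rfl⟩ : ∃ j', j = j' + 1 := ⟨j - 1, by omega⟩
      rw [hco j', ih.2 j' (by omega), ih.2 (j' + 1) (by omega), zero_mul, sub_zero]



end AuxMaterial

/-- Coordinate change `u = z − q`, `q` a nonzero homogeneous polynomial of positive degree:
if `c!·deg q ≥ o`, then `o₁ ≥ o`, where `o = ord coeff_{V(z)}(J)` and
`o₁ = ord coeff_{V(u)}(J)` for an ideal `J ⊆ 𝕂[[z,x₁,…,xₙ]]` of order `c`, `1 ≤ c < ∞`. -/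
theorem order_coeff_ideal_after_translation_ge {𝕂 : Type*} [Field 𝕂] (p : ℕ)
    (hp : p.Prime) [CharP 𝕂 p] {n : ℕ}
    (q : MvPolynomial (Fin n) 𝕂) (d : ℕ) (hq0 : q ≠ 0) (hqd : q.IsHomogeneous d) (hd : 1 ≤ d)
    (u : PowerSeries (MvPowerSeries (Fin n) 𝕂))
    (hu : u = PowerSeries.X -
      PowerSeries.C (R := MvPowerSeries (Fin n) 𝕂) (↑q : MvPowerSeries (Fin n) 𝕂))
    (J : Ideal (PowerSeries (MvPowerSeries (Fin n) 𝕂))) (c : ℕ) (hc1 : 1 ≤ c)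
    (hc : idealOrd (IsLocalRing.maximalIdeal (PowerSeries (MvPowerSeries (Fin n) 𝕂))) J
      = (c : ℕ∞))
    (E : PowerSeries (MvPowerSeries (Fin n) 𝕂) → ℕ → MvPowerSeries (Fin n) 𝕂)
    (hE : ∀ f : PowerSeries (MvPowerSeries (Fin n) 𝕂), ∀ N : ℕ,
      f - ∑ i ∈ Finset.range N, PowerSeries.C (R := MvPowerSeries (Fin n) 𝕂) (E f i) * u ^ i
        ∈ Ideal.span {u ^ N})
    (hdeg : ((c.factorial * d : ℕ) : ℕ∞)
      ≥ idealOrd (IsLocalRing.maximalIdeal (MvPowerSeries (Fin n) 𝕂)) (coeffIdeal J c)) :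
    idealOrd (IsLocalRing.maximalIdeal (MvPowerSeries (Fin n) 𝕂)) (coeffIdealE E J c)
      ≥ idealOrd (IsLocalRing.maximalIdeal (MvPowerSeries (Fin n) 𝕂)) (coeffIdeal J c) := by
  
  classical
  set Qm := IsLocalRing.maximalIdeal (MvPowerSeries (Fin n) 𝕂) with hQm
  obtain ⟨o, ho, hole⟩ : ∃ o : ℕ, idealOrd Qm (coeffIdeal J c) = (o : ℕ∞)
      ∧ o ≤ c.factorial * d := by
    have hne : idealOrd Qm (coeffIdeal J c) ≠ ⊤ := by
      intro h
      rw [h] at hdeg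
      have h2 : ((c.factorial * d : ℕ) : ℕ∞) = ⊤ := top_le_iff.mp hdeg
      exact absurd h2 (by exact_mod_cast WithTop.natCast_ne_top _)
    obtain ⟨o, ho'⟩ := WithTop.ne_top_iff_exists.mp hne
    have ho'' : idealOrd Qm (coeffIdeal J c) = ((o : ℕ) : ℕ∞) := ho'.symm
    refine ⟨o, ho'', ?_⟩
    rw [ho'', ge_iff_le] at hdeg
    exact_mod_cast hdeg
  have hKm : coeffIdeal J c ≤ Qm ^ o := le_pow_of_idealOrd_eq ho
  rw [ho]
  -- `q` lies in the `d`-th power of the maximal ideal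
  have hqm : (↑q : MvPowerSeries (Fin n) 𝕂) ∈ Qm ^ d := by
    apply Oid_le_maxQ_pow d
    rw [mem_Oid]
    apply MvPowerSeries.nat_le_order
    intro e he
    rw [MvPolynomial.coeff_coe]
    by_contra hc0
    have := hqd hc0
    change Finsupp.weight (fun _ => 1) e = d at this
    rw [← Finsupp.degree_eq_weight_one] at this
    omega
  set a : ℕ → ℕ := fun j => (o * (c - j) + c.factorial - 1) / c.factorial with ha
  have hfac1 : 1 ≤ c.factorial := c.factorial_pos
  have hadvd : ∀ j, j < c → (c.factorial / (c - j)) * (c - j) = c.factorial := by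
    intro j hj
    exact Nat.div_mul_cancel (Nat.dvd_factorial (by omega) (by omega))
  have ha_mul : ∀ j, o * (c - j) ≤ a j * c.factorial := by
    intro j
    simp only [ha]
    exact ceil_mul_ge hfac1
  have ha_le : ∀ j t, o * (c - j) ≤ t * c.factorial → a j ≤ t := by
    intro j t h
    simp only [ha]
    exact le_ceil hfac1 h
  have hu_mem : ∀ i : ℕ, u ^ i ∈ (Ideal.span {PowerSeries.X,
      PowerSeries.C (R := MvPowerSeries (Fin n) 𝕂) (↑q : MvPowerSeries (Fin n) 𝕂)}) ^ i := by
    intro i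
    apply Ideal.pow_mem_pow
    rw [hu]
    exact Ideal.sub_mem _ (Ideal.subset_span (by simp)) (Ideal.subset_span (by simp))
  -- the key claim
  have key : ∀ f ∈ J, ∀ j < c, E f j ∈ Qm ^ (a j) := by
    intro f hf
    obtain ⟨g, hg⟩ := Ideal.mem_span_singleton'.mp (hE f c)
    have hfeq : f = (∑ i ∈ Finset.range c,
        PowerSeries.C (R := MvPowerSeries (Fin n) 𝕂) (E f i) * u ^ i) + u ^ c * g := by
      linear_combination -hg
    have hcoeff : ∀ j : ℕ, PowerSeries.coeff (R := MvPowerSeries (Fin n) 𝕂) j f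
        = (∑ i ∈ Finset.range c,
            E f i * PowerSeries.coeff (R := MvPowerSeries (Fin n) 𝕂) j (u ^ i))
          + PowerSeries.coeff (R := MvPowerSeries (Fin n) 𝕂) j (u ^ c * g) := by
      intro j
      conv_lhs => rw [hfeq]
      rw [map_add, map_sum]
      congr 1
      exact Finset.sum_congr rfl fun i _ => PowerSeries.coeff_C_mul j _ _
    have htail : ∀ j : ℕ, PowerSeries.coeff (R := MvPowerSeries (Fin n) 𝕂) j (u ^ c * g)
        ∈ Qm ^ (d * (c - j)) := by
      intro j
      exact coeff_span_pow _ d hqm c (u ^ c * g) (Ideal.mul_mem_right g _ (hu_mem c)) j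
    have hfj : ∀ j, j < c → PowerSeries.coeff (R := MvPowerSeries (Fin n) 𝕂) j f ∈ Qm ^ (a j) := by
      intro j hj
      have h1 : (PowerSeries.coeff (R := MvPowerSeries (Fin n) 𝕂) j f) ^ (c.factorial / (c - j))
          ∈ Qm ^ o := by
        apply hKm
        apply ideal_le_sum (Finset.range c)
          (fun i => (Ideal.span ((PowerSeries.coeff (R := MvPowerSeries (Fin n) 𝕂) i) '' J))
            ^ (c.factorial / (c - i))) (Finset.mem_range.mpr hj)
        refine Ideal.pow_mem_pow (Ideal.subset_span ?_) _
        exact Set.mem_image_of_mem _ hf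
      have he1 : 1 ≤ c.factorial / (c - j) := by
        apply (Nat.le_div_iff_mul_le (by omega : 0 < c - j)).mpr
        rw [one_mul]
        exact le_trans (by omega) c.self_le_factorial
      obtain ⟨s, hs1, hs2⟩ := order_facts he1 (mem_Oid.mp (maxQ_pow_le_Oid o h1))
      apply Oid_le_maxQ_pow (a j)
      refine Oid_anti (ha_le j s ?_) (mem_Oid.mpr hs1)
      calc o * (c - j) ≤ (c.factorial / (c - j) * s) * (c - j) :=
            Nat.mul_le_mul_right _ hs2
      _ = s * ((c.factorial / (c - j)) * (c - j)) := by ring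
      _ = s * c.factorial := by rw [hadvd j hj]
    have main : ∀ t : ℕ, ∀ j, j < c → c - j ≤ t → E f j ∈ Qm ^ (a j) := by
      intro t
      induction t with
      | zero => intro j hj h0; omega
      | succ t iht =>
        intro j hj hjt
        have hiden : E f j = PowerSeries.coeff (R := MvPowerSeries (Fin n) 𝕂) j f
            - PowerSeries.coeff (R := MvPowerSeries (Fin n) 𝕂) j (u ^ c * g)
            - ∑ i ∈ (Finset.range c).erase j,
                E f i * PowerSeries.coeff (R := MvPowerSeries (Fin n) 𝕂) j (u ^ i) := by
          have h1 : (∑ i ∈ (Finset.range c).erase j,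
                E f i * PowerSeries.coeff (R := MvPowerSeries (Fin n) 𝕂) j (u ^ i))
              + E f j * PowerSeries.coeff (R := MvPowerSeries (Fin n) 𝕂) j (u ^ j)
              = ∑ i ∈ Finset.range c,
                E f i * PowerSeries.coeff (R := MvPowerSeries (Fin n) 𝕂) j (u ^ i) :=
            Finset.sum_erase_add _ _ (Finset.mem_range.mpr hj)
          have h2 : PowerSeries.coeff (R := MvPowerSeries (Fin n) 𝕂) j (u ^ j) = 1 := by
            rw [hu]; exact (coeff_u_pow _ j).1
          rw [h2, mul_one] at h1
          have h3 := hcoeff j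
          rw [← h1] at h3
          linear_combination -h3
        rw [hiden]
        refine Ideal.sub_mem _ (Ideal.sub_mem _ (hfj j hj) ?_) ?_
        · refine Ideal.pow_le_pow_right (ha_le j _ ?_) (htail j)
          calc o * (c - j) ≤ (c.factorial * d) * (c - j) := Nat.mul_le_mul_right _ hole
          _ = d * (c - j) * c.factorial := by ring
        · apply Submodule.sum_mem
          intro i hi
          have hine : i ≠ j := Finset.ne_of_mem_erase hi
          have hic : i < c := Finset.mem_range.mp (Finset.mem_of_mem_erase hi)
          rcases Nat.lt_or_ge i j with hij | hij
          · rw [hu, (coeff_u_pow _ i).2 j hij, mul_zero]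
            exact Submodule.zero_mem _
          · have hij' : j < i := by omega
            have h4 : E f i ∈ Qm ^ (a i) := iht i hic (by omega)
            have h5 : PowerSeries.coeff (R := MvPowerSeries (Fin n) 𝕂) j (u ^ i)
                ∈ Qm ^ (d * (i - j)) :=
              coeff_span_pow _ d hqm i (u ^ i) (hu_mem i) j
            have h6 := Ideal.mul_mem_mul h4 h5
            rw [← pow_add] at h6
            refine Ideal.pow_le_pow_right (ha_le j _ ?_) h6
            calc o * (c - j) = o * (c - i) + o * (i - j) := by
                  rw [← Nat.mul_add]
                  congr 1
                  omega
            _ ≤ a i * c.factorial + d * (i - j) * c.factorial := by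
                  apply Nat.add_le_add (ha_mul i)
                  calc o * (i - j) ≤ (c.factorial * d) * (i - j) := Nat.mul_le_mul_right _ hole
                  _ = d * (i - j) * c.factorial := by ring
            _ = (a i + d * (i - j)) * c.factorial := by ring
    exact fun j hj => main c j hj (Nat.sub_le c j)
  -- conclusion
  apply le_idealOrd_of_le
  unfold coeffIdealE
  apply ideal_sum_le
  intro i hi
  have hic : i < c := Finset.mem_range.mp hi
  have hsp : Ideal.span ((fun f => E f i) '' ↑J) ≤ Qm ^ (a i) := by
    rw [Ideal.span_le]
    rintro _ ⟨f, hf, rfl⟩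
    exact key f hf i hic
  calc Ideal.span ((fun f => E f i) '' ↑J) ^ (c.factorial / (c - i))
      ≤ (Qm ^ (a i)) ^ (c.factorial / (c - i)) := Ideal.pow_right_mono hsp _
  _ = Qm ^ (a i * (c.factorial / (c - i))) := (pow_mul Qm _ _).symm
  _ ≤ Qm ^ o := by
      refine Ideal.pow_le_pow_right ?_
      have h1 : o * (c - i) ≤ a i * (c.factorial / (c - i)) * (c - i) := by
        rw [mul_assoc, hadvd i hic]
        exact ha_mul i
      exact Nat.le_of_mul_le_mul_right h1 (by omega)
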